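/- Let c00,c01,c10,c11 and b00,b01,b10,b11 be real numbers with K := b10 − c10 − b00 + c00 ≠ 0, and let P11, P10 be real numbers with t := P11 − P10. Then the expected causal profit vanishes, E[Ṗ] = 0, if and only if t = γ + δ·P11, i.e., the set of instances with zero expected causal profit is exactly the cost-sensitive causal classification decision boundary. -/

import Mathlib

/-- the expected causal profit vanishes exactly on the
cost-sensitive causal classification decision boundary. -/
theorem expected_causal_profit_zero_iff_on_boundary
    (c00 c01 c10 c11 b00 b01 b10 b11 P11 P10 : ℝ)
    (hK : b10 - c10 - b00 + c00 ≠ 0) :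
    (P11 * (b11 - c11) + (1 - P11) * (b01 - c01)) -
        (P10 * (b10 - c10) + (1 - P10) * (b00 - c00)) = 0 ↔
      P11 - P10 =
        (b00 - c00 - b01 + c01) / (b10 - c10 - b00 + c00) +
          (b10 - c10 + b01 - c01 - b11 + c11 - b00 + c00) / (b10 - c10 - b00 + c00) * P11 := by
  rw [div_mul_eq_mul_div, ← add_div, eq_div_iff hK]
  constructor <;> intro h <;> linarith [h]
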